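/- arXiv:1401.0770 — 5 statements merged into one kernel-verified Lean document; each statement's English description precedes it below -/
import Mathlib

section
/- For integers r,s ≥ 1, the partial Catalan convolution p_{r,s} = Σ_{k=1}^{s} C_{r+s-(k+1)} · C_{k-1} satisfies p_{r,s} = C_{r+s-2} + Σ_{k=1}^{s-1} C_{k-1} · p_{r,s-k}, where C_n denotes the n-th Catalan number. -/
open Finset

/-- The partial Catalan convolution `p_{r,s} = Σ_{k=1}^{s} C_{r+s-k-1} · C_{k-1}`. -/
def partialCatalanConv (r s : ℕ) : ℕ :=
  ∑ k ∈ Finset.Icc 1 s, catalan (r + s - k - 1) * catalan (k - 1)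

/-- Triangle reindexing lemma. -/
lemma tri_sum (F : ℕ → ℕ → ℕ) (m : ℕ) :
    ∑ k ∈ range m, ∑ j ∈ range (k + 1), F k j
      = ∑ k ∈ range m, ∑ j ∈ range (m - k), F (k + j) j := by
  induction m with
  | zero => simp
  | succ m ih =>
    have split : ∑ k ∈ range (m + 1), ∑ j ∈ range (m + 1 - k), F (k + j) j
        = (∑ k ∈ range m, ∑ j ∈ range (m + 1 - k), F (k + j) j) + F m 0 := by
      rw [sum_range_succ]; simp
    have h1 : ∀ k ∈ range m, ∑ j ∈ range (m + 1 - k), F (k + j) j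
        = (∑ j ∈ range (m - k), F (k + j) j) + F m (m - k) := by
      intro k hk
      have hk' : k ≤ m := le_of_lt (mem_range.mp hk)
      have e : m + 1 - k = (m - k) + 1 := by omega
      rw [e, sum_range_succ]
      have e2 : k + (m - k) = m := by omega
      rw [e2]
    have h2 : ∑ k ∈ range m, F m (m - k) = ∑ k ∈ range m, F m (k + 1) := by
      rw [← sum_range_reflect]
      apply sum_congr rfl
      intro k hk
      have : m - (m - 1 - k) = k + 1 := by
        have := mem_range.mp hk; omega
      rw [this]
    rw [split, sum_congr rfl h1, sum_add_distrib, h2, sum_range_succ, ih,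
      add_assoc, ← sum_range_succ' (fun j => F m j) m]

/-- `p_{r+1,s+1}` as a range sum without truncated subtraction issues. -/
lemma partialCatalanConv_range (r s : ℕ) :
    partialCatalanConv (r + 1) (s + 1)
      = ∑ k ∈ range (s + 1), catalan (r + s - k) * catalan k := by
  unfold partialCatalanConv
  have h0 : Finset.Icc 1 (s + 1) = Finset.Ico 1 (s + 2) := rfl
  rw [h0, sum_Ico_eq_sum_range]
  have e : s + 2 - 1 = s + 1 := rfl
  rw [e]
  apply sum_congr rfl
  intro k hk
  have hk' : k < s + 1 := mem_range.mp hk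
  have e1 : r + 1 + (s + 1) - (1 + k) - 1 = r + s - k := by omega
  have e2 : 1 + k - 1 = k := by omega
  rw [e1, e2]

/-- Catalan recurrence in range form. -/
lemma catalan_succ_range (n : ℕ) :
    catalan (n + 1) = ∑ j ∈ range (n + 1), catalan j * catalan (n - j) := by
  rw [catalan_succ, Finset.sum_range]

theorem partialCatalanConv_recurrence (r s : ℕ) (hr : 1 ≤ r) (hs : 1 ≤ s) :
    partialCatalanConv r s =
      catalan (r + s - 2) +
        ∑ k ∈ Finset.Icc 1 (s - 1), catalan (k - 1) * partialCatalanConv r (s - k) := by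
  obtain ⟨r', rfl⟩ : ∃ r', r = r' + 1 := ⟨r - 1, by omega⟩
  obtain ⟨m, rfl⟩ : ∃ m, s = m + 1 := ⟨s - 1, by omega⟩
  clear hr hs
  -- rewrite the RHS tail sum as a range sum
  have hRHS : ∑ k ∈ Finset.Icc 1 (m + 1 - 1),
        catalan (k - 1) * partialCatalanConv (r' + 1) (m + 1 - k)
      = ∑ k ∈ range m, catalan k * partialCatalanConv (r' + 1) ((m - 1 - k) + 1) := by
    have h1 : Finset.Icc 1 (m + 1 - 1) = Finset.Ico 1 (m + 1) := by
      congr 1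
    rw [h1, sum_Ico_eq_sum_range]
    have e : m + 1 - 1 = m := rfl
    rw [e]
    apply sum_congr rfl
    intro k hk
    have hk' : k < m := mem_range.mp hk
    have e1 : 1 + k - 1 = k := by omega
    have e2 : m + 1 - (1 + k) = (m - 1 - k) + 1 := by omega
    rw [e1, e2]
  rw [hRHS, partialCatalanConv_range]
  have hC2 : r' + 1 + (m + 1) - 2 = r' + m := by omega
  rw [hC2]
  -- expand the inner p's as range sums
  have hinner : ∀ k ∈ range m,
      catalan k * partialCatalanConv (r' + 1) ((m - 1 - k) + 1)
        = ∑ j ∈ range (m - k), catalan k * (catalan (r' + m - 1 - k - j) * catalan j) := by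
    intro k hk
    have hk' : k < m := mem_range.mp hk
    rw [partialCatalanConv_range, mul_sum]
    have e : (m - 1 - k) + 1 = m - k := by omega
    rw [e]
    apply sum_congr rfl
    intro j hj
    have hj' : j < m - k := mem_range.mp hj
    have e1 : r' + (m - 1 - k) - j = r' + m - 1 - k - j := by omega
    rw [e1]
  rw [sum_congr rfl hinner]
  -- expand the LHS: split off k = 0 and use the Catalan recurrence
  rw [sum_range_succ' (fun k => catalan (r' + m - k) * catalan k) m]
  simp only [catalan_zero, mul_one, Nat.sub_zero]
  have hLHS : ∀ k ∈ range m, catalan (r' + m - (k + 1)) * catalan (k + 1)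
      = ∑ j ∈ range (k + 1), catalan (r' + m - 1 - k) * (catalan j * catalan (k - j)) := by
    intro k hk
    rw [catalan_succ_range, mul_sum]
    have e : r' + m - (k + 1) = r' + m - 1 - k := by omega
    rw [e]
  rw [sum_congr rfl hLHS]
  rw [tri_sum (fun k j => catalan (r' + m - 1 - k) * (catalan j * catalan (k - j))) m]
  rw [add_comm]
  congr 1
  apply sum_congr rfl
  intro k hk
  apply sum_congr rfl
  intro j hj
  have hk' : k < m := mem_range.mp hk
  have hj' : j < m - k := mem_range.mp hj
  have e1 : r' + m - 1 - (k + j) = r' + m - 1 - k - j := by omega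
  have e2 : k + j - j = k := by omega
  rw [e1, e2]
  ring
end

section
/- The Catalan numbers satisfy the asymptotic formula C_n ~ 4^n / (√π · n^{3/2}) as n → ∞; that is, the limit of C_n · √π · n^{3/2} / 4^n as n → ∞ equals 1. -/
open Filter Real Stirling
lemma centralBinom_cast (n : ℕ) : ((n.centralBinom : ℝ)) = (2*n).factorial / (n.factorial)^2 := by
  rw [Nat.centralBinom, eq_div_iff (by positivity), sq, ← mul_assoc]
  have h := Nat.choose_mul_factorial_mul_factorial (by omega : n ≤ 2*n)
  rw [show 2*n - n = n by omega] at h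
  exact_mod_cast h

lemma key (n : ℕ) (hn : 1 ≤ n) :
    (catalan n : ℝ) * Real.sqrt Real.pi * (n : ℝ) ^ (3 / 2 : ℝ) / 4 ^ n
      = stirlingSeq (2*n) / stirlingSeq n ^ 2 * Real.sqrt Real.pi * ((n:ℝ) / (n+1)) := by
  have hn0 : (0:ℝ) < n := by exact_mod_cast hn
  have hcat : (catalan n : ℝ) = n.centralBinom / (n+1) := by
    rw [catalan_eq_centralBinom_div]
    rw [Nat.cast_div n.succ_dvd_centralBinom (by positivity)]
    push_cast; ring_nf
  have hfac : ∀ m : ℕ, 1 ≤ m → ((m.factorial : ℝ)) = stirlingSeq m * (√(2*m) * ((m:ℝ)/Real.exp 1)^m) := by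
    intro m hm
    have h0 : (0:ℝ) < m := by exact_mod_cast hm
    rw [stirlingSeq, div_mul_cancel₀]
    positivity
  have h1 := hfac n hn
  have h2 := hfac (2*n) (by omega)
  have hs1 : (0:ℝ) < stirlingSeq n := by rw [stirlingSeq]; positivity
  have hrpow : (n:ℝ) ^ (3 / 2 : ℝ) = (n:ℝ) * √(n:ℝ) := by
    rw [show (3/2:ℝ) = 1 + 1/2 by norm_num, Real.rpow_add hn0, Real.rpow_one, ← Real.sqrt_eq_rpow]
  have hsq4 : √(2*((2*n:ℕ):ℝ)) = 2 * √(n:ℝ) := by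
    push_cast
    rw [show (2:ℝ)*(2*n) = 2^2 * n by ring, Real.sqrt_mul (by positivity), Real.sqrt_sq (by norm_num)]
  have hsqsq : √(n:ℝ) * √(n:ℝ) = n := Real.mul_self_sqrt hn0.le
  have hsq2 : √(2*(n:ℝ)) ≠ 0 := by positivity
  have hpow : (((2*n:ℕ):ℝ)/Real.exp 1)^(2*n) = 4^n * ((n:ℝ)/Real.exp 1)^(2*n) := by
    push_cast
    rw [mul_div_assoc, mul_pow, pow_mul]
    norm_num
  rw [hcat, centralBinom_cast, h1, h2, hrpow, hsq4, hpow]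
  have hexp : ((n:ℝ)/Real.exp 1)^(2*n) = (((n:ℝ)/Real.exp 1)^n)^2 := by rw [← pow_mul, mul_comm]
  rw [hexp]
  have he : ((n:ℝ)/Real.exp 1)^n ≠ 0 := by positivity
  field_simp
  ring_nf
  rw [Real.sq_sqrt hn0.le, Real.sq_sqrt (by positivity : (0:ℝ) ≤ (n:ℝ) * 2)]
  ring

theorem catalan_asymptotic :
    Filter.Tendsto
      (fun n : ℕ => (catalan n : ℝ) * Real.sqrt Real.pi * (n : ℝ) ^ (3 / 2 : ℝ) / 4 ^ n)
      Filter.atTop (nhds 1) := by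
  have hπ : √π ≠ 0 := by positivity
  have h2n : Tendsto (fun n : ℕ => 2 * n) atTop atTop :=
    tendsto_atTop_mono (fun n => by simp; omega) tendsto_id
  have hs2 : Tendsto (fun n : ℕ => stirlingSeq (2 * n)) atTop (nhds (√π)) :=
    tendsto_stirlingSeq_sqrt_pi.comp h2n
  have hratio : Tendsto (fun n : ℕ => (n : ℝ) / (n + 1)) atTop (nhds 1) := by
    simpa using tendsto_natCast_div_add_atTop (1 : ℝ)
  have hlim : Tendsto
      (fun n : ℕ => stirlingSeq (2 * n) / stirlingSeq n ^ 2 * √π * ((n : ℝ) / (n + 1)))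
      atTop (nhds 1) := by
    have := ((hs2.div (tendsto_stirlingSeq_sqrt_pi.pow 2) (by positivity)).mul_const (√π)).mul
      hratio
    have heq : √π / √π ^ 2 * √π * 1 = 1 := by field_simp
    rwa [heq] at this
  refine hlim.congr' ?_
  filter_upwards [eventually_ge_atTop 1] with n hn
  exact (key n hn).symm
end

section
/- If σ is a permutation of {1,...,n} that is a Baxter permutation, then its inverse σ^{-1} is also a Baxter permutation. -/
/-- A permutation of `Fin n` (0-indexed) is a Baxter permutation if there are no
indices `i < j < j+1 ≤ k` with `σ(j+1) < σ(i) < σ(k) < σ(j)` or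
`σ(j) < σ(k) < σ(i) < σ(j+1)`. -/
def IsBaxter {n : ℕ} (σ : Equiv.Perm (Fin n)) : Prop :=
  ∀ i j k : Fin n, i < j → ∀ h : (j : ℕ) + 1 ≤ (k : ℕ),
    ¬ ((σ ⟨(j : ℕ) + 1, lt_of_le_of_lt h k.isLt⟩ < σ i ∧ σ i < σ k ∧ σ k < σ j) ∨
       (σ j < σ k ∧ σ k < σ i ∧ σ i < σ ⟨(j : ℕ) + 1, lt_of_le_of_lt h k.isLt⟩))

/-- A permutation is alternating: ascents at even (0-indexed) positions,
descents at odd positions, i.e. `σ(1) < σ(2) > σ(3) < σ(4) > ⋯` in 1-indexed terms. -/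
def IsAlternating {n : ℕ} (σ : Equiv.Perm (Fin n)) : Prop :=
  ∀ i : Fin n, ∀ h : (i : ℕ) + 1 < n,
    (Even (i : ℕ) → σ i < σ ⟨(i : ℕ) + 1, h⟩) ∧
    (Odd (i : ℕ) → σ ⟨(i : ℕ) + 1, h⟩ < σ i)

/-- Reverse-alternating: `σ(1) > σ(2) < σ(3) > ⋯` in 1-indexed terms. -/
def IsRevAlternating {n : ℕ} (σ : Equiv.Perm (Fin n)) : Prop :=
  ∀ i : Fin n, ∀ h : (i : ℕ) + 1 < n,
    (Even (i : ℕ) → σ ⟨(i : ℕ) + 1, h⟩ < σ i) ∧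
    (Odd (i : ℕ) → σ i < σ ⟨(i : ℕ) + 1, h⟩)

/-- Doubly alternating Baxter permutation. -/
def IsDAB {n : ℕ} (σ : Equiv.Perm (Fin n)) : Prop :=
  IsBaxter σ ∧ IsAlternating σ ∧ IsAlternating σ⁻¹

/-- `B(m,i,j)`: the number of doubly alternating Baxter permutations of `{1,…,2m}`
with `σ(i) = j` (here `i, j` are 1-indexed). -/
noncomputable def dabCount (m i j : ℕ) : ℕ :=
  Nat.card {σ : Equiv.Perm (Fin (2 * m)) //
    IsDAB σ ∧ ∃ hi : i - 1 < 2 * m, ((σ ⟨i - 1, hi⟩ : Fin (2 * m)) : ℕ) = j - 1}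

private lemma exists_transition (P : ℕ → Prop) :
    ∀ (b a : ℕ), a < b → P a → ¬ P b →
    ∃ q, a ≤ q ∧ q < b ∧ P q ∧ ¬ P (q + 1) := by
  intro b
  induction b with
  | zero => intro a hab _ _; omega
  | succ b ih =>
    intro a hab ha hb
    by_cases hpb : P b
    · exact ⟨b, by omega, by omega, hpb, hb⟩
    · rcases Nat.lt_or_ge a b with h' | h'
      · obtain ⟨q, h1, h2, h3, h4⟩ := ih a h' ha hpb
        exact ⟨q, h1, by omega, h3, h4⟩
      · have : a = b := by omega
        subst this; exact absurd ha hpb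

private lemma exists_transition' (P : ℕ → Prop) :
    ∀ (b a : ℕ), a < b → ¬ P a → P b →
    ∃ q, a ≤ q ∧ q < b ∧ ¬ P q ∧ P (q + 1) := by
  intro b
  induction b with
  | zero => intro a hab _ _; omega
  | succ b ih =>
    intro a hab ha hb
    rcases Nat.lt_or_ge a b with h' | h'
    · by_cases hpb : P b
      · obtain ⟨q, h1, h2, h3, h4⟩ := ih a h' ha hpb
        exact ⟨q, h1, by omega, h3, h4⟩
      · exact ⟨b, by omega, by omega, hpb, hb⟩
    · have : a = b := by omega
      subst this
      exact ⟨a, le_refl a, by omega, ha, hb⟩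

private lemma baxter_aux1 {n : ℕ} (σ : Equiv.Perm (Fin n)) (h : IsBaxter σ)
    (a b b' c : Fin n)
    (p1 : (b' : ℕ) < (a : ℕ)) (p2 : (a : ℕ) < (c : ℕ)) (p3 : (c : ℕ) < (b : ℕ))
    (v1 : ((σ b' : Fin n) : ℕ) = ((σ b : Fin n) : ℕ) + 1)
    (v2 : ((σ a : Fin n) : ℕ) < ((σ b : Fin n) : ℕ))
    (v3 : ((σ b' : Fin n) : ℕ) ≤ ((σ c : Fin n) : ℕ)) : False := by
  have hPa : ∀ hq : (a : ℕ) < n, ((σ ⟨(a : ℕ), hq⟩ : Fin n) : ℕ) ≤ ((σ b : Fin n) : ℕ) := by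
    intro hq
    have : (⟨(a : ℕ), hq⟩ : Fin n) = a := Fin.ext rfl
    rw [this]; omega
  have hPc : ¬ ∀ hq : (c : ℕ) < n, ((σ ⟨(c : ℕ), hq⟩ : Fin n) : ℕ) ≤ ((σ b : Fin n) : ℕ) := by
    intro hp
    have := hp c.isLt
    rw [show (⟨(c : ℕ), c.isLt⟩ : Fin n) = c from Fin.ext rfl] at this
    omega
  obtain ⟨q, hq1, hq2, hq3, hq4⟩ :=
    exists_transition
      (fun q => ∀ hq : q < n, ((σ ⟨q, hq⟩ : Fin n) : ℕ) ≤ ((σ b : Fin n) : ℕ))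
      (c : ℕ) (a : ℕ) p2 hPa hPc
  have hqn : q < n := lt_trans hq2 c.isLt
  have hq1n : q + 1 < n := lt_of_le_of_lt hq2 c.isLt
  have hqlow : ((σ ⟨q, hqn⟩ : Fin n) : ℕ) ≤ ((σ b : Fin n) : ℕ) := hq3 hqn
  have hqhigh : ((σ b : Fin n) : ℕ) < ((σ ⟨q + 1, hq1n⟩ : Fin n) : ℕ) :=
    Nat.lt_of_not_le (fun hle => hq4 (fun hq' => hle))
  clear hq3 hq4 hPa hPc
  have hne1 : ((σ ⟨q, hqn⟩ : Fin n) : ℕ) ≠ ((σ b : Fin n) : ℕ) := by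
    intro heq
    have h' : σ (⟨q, hqn⟩ : Fin n) = σ b := Fin.ext heq
    have h'' : q = (b : ℕ) := congrArg Fin.val (σ.injective h')
    omega
  have hne2 : ((σ ⟨q + 1, hq1n⟩ : Fin n) : ℕ) ≠ ((σ b' : Fin n) : ℕ) := by
    intro heq
    have h' : σ (⟨q + 1, hq1n⟩ : Fin n) = σ b' := Fin.ext heq
    have h'' : q + 1 = (b' : ℕ) := congrArg Fin.val (σ.injective h')
    omega
  have hlt1 : b' < (⟨q, hqn⟩ : Fin n) := by
    show (b' : ℕ) < q; omega
  have hle1 : ((⟨q, hqn⟩ : Fin n) : ℕ) + 1 ≤ (b : ℕ) := by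
    show q + 1 ≤ (b : ℕ); omega
  refine h b' ⟨q, hqn⟩ b hlt1 hle1 (Or.inr ⟨?_, ?_, ?_⟩)
  · show ((σ ⟨q, hqn⟩ : Fin n) : ℕ) < ((σ b : Fin n) : ℕ)
    omega
  · show ((σ b : Fin n) : ℕ) < ((σ b' : Fin n) : ℕ)
    omega
  · show ((σ b' : Fin n) : ℕ) < ((σ ⟨q + 1, hq1n⟩ : Fin n) : ℕ)
    omega

private lemma baxter_aux2 {n : ℕ} (σ : Equiv.Perm (Fin n)) (h : IsBaxter σ)
    (a b b' c : Fin n)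
    (p1 : (b : ℕ) < (c : ℕ)) (p2 : (c : ℕ) < (a : ℕ)) (p3 : (a : ℕ) < (b' : ℕ))
    (v1 : ((σ b' : Fin n) : ℕ) = ((σ b : Fin n) : ℕ) + 1)
    (v2 : ((σ a : Fin n) : ℕ) < ((σ b : Fin n) : ℕ))
    (v3 : ((σ b' : Fin n) : ℕ) ≤ ((σ c : Fin n) : ℕ)) : False := by
  have hPa : ∀ hq : (a : ℕ) < n, ((σ ⟨(a : ℕ), hq⟩ : Fin n) : ℕ) ≤ ((σ b : Fin n) : ℕ) := by
    intro hq
    have : (⟨(a : ℕ), hq⟩ : Fin n) = a := Fin.ext rfl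
    rw [this]; omega
  have hPc : ¬ ∀ hq : (c : ℕ) < n, ((σ ⟨(c : ℕ), hq⟩ : Fin n) : ℕ) ≤ ((σ b : Fin n) : ℕ) := by
    intro hp
    have := hp c.isLt
    rw [show (⟨(c : ℕ), c.isLt⟩ : Fin n) = c from Fin.ext rfl] at this
    omega
  obtain ⟨q, hq1, hq2, hq3, hq4⟩ :=
    exists_transition'
      (fun q => ∀ hq : q < n, ((σ ⟨q, hq⟩ : Fin n) : ℕ) ≤ ((σ b : Fin n) : ℕ))
      (a : ℕ) (c : ℕ) p2 hPc hPa
  have hqn : q < n := lt_trans hq2 a.isLt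
  have hq1n : q + 1 < n := lt_of_le_of_lt hq2 a.isLt
  have hqhigh : ((σ b : Fin n) : ℕ) < ((σ ⟨q, hqn⟩ : Fin n) : ℕ) :=
    Nat.lt_of_not_le (fun hle => hq3 (fun hq' => hle))
  have hqlow : ((σ ⟨q + 1, hq1n⟩ : Fin n) : ℕ) ≤ ((σ b : Fin n) : ℕ) := hq4 hq1n
  clear hq3 hq4 hPa hPc
  have hne1 : ((σ ⟨q, hqn⟩ : Fin n) : ℕ) ≠ ((σ b' : Fin n) : ℕ) := by
    intro heq
    have h' : σ (⟨q, hqn⟩ : Fin n) = σ b' := Fin.ext heq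
    have h'' : q = (b' : ℕ) := congrArg Fin.val (σ.injective h')
    omega
  have hne2 : ((σ ⟨q + 1, hq1n⟩ : Fin n) : ℕ) ≠ ((σ b : Fin n) : ℕ) := by
    intro heq
    have h' : σ (⟨q + 1, hq1n⟩ : Fin n) = σ b := Fin.ext heq
    have h'' : q + 1 = (b : ℕ) := congrArg Fin.val (σ.injective h')
    omega
  have hlt1 : b < (⟨q, hqn⟩ : Fin n) := by
    show (b : ℕ) < q; omega
  have hle1 : ((⟨q, hqn⟩ : Fin n) : ℕ) + 1 ≤ (b' : ℕ) := by
    show q + 1 ≤ (b' : ℕ); omega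
  refine h b ⟨q, hqn⟩ b' hlt1 hle1 (Or.inl ⟨?_, ?_, ?_⟩)
  · show ((σ ⟨q + 1, hq1n⟩ : Fin n) : ℕ) < ((σ b : Fin n) : ℕ)
    omega
  · show ((σ b : Fin n) : ℕ) < ((σ b' : Fin n) : ℕ)
    omega
  · show ((σ b' : Fin n) : ℕ) < ((σ ⟨q, hqn⟩ : Fin n) : ℕ)
    omega

theorem isBaxter_inv {n : ℕ} (σ : Equiv.Perm (Fin n)) (h : IsBaxter σ) :
    IsBaxter σ⁻¹ := by
  intro i j k hij hk hcon
  have e : ∀ x : Fin n, σ (σ⁻¹ x) = x := fun x => Equiv.apply_symm_apply σ x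
  rcases hcon with ⟨h1, h2, h3⟩ | ⟨h1, h2, h3⟩
  · refine baxter_aux1 σ h (σ⁻¹ i) (σ⁻¹ j) (σ⁻¹ ⟨(j : ℕ) + 1, lt_of_le_of_lt hk k.isLt⟩)
      (σ⁻¹ k) h1 h2 h3 ?_ ?_ ?_
    · rw [e, e]
    · rw [e, e]; exact hij
    · rw [e, e]; exact hk
  · refine baxter_aux2 σ h (σ⁻¹ i) (σ⁻¹ j) (σ⁻¹ ⟨(j : ℕ) + 1, lt_of_le_of_lt hk k.isLt⟩)
      (σ⁻¹ k) h1 h2 h3 ?_ ?_ ?_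
    · rw [e, e]
    · rw [e, e]; exact hij
    · rw [e, e]; exact hk
end

section
/- Let B(m,i,j) be the number of doubly alternating Baxter permutations σ of {1,...,2m} with σ(i) = j. Then B(m,i,j) = B(m, 2m+1-j, 2m+1-i) for all m ≥ 1 and i,j ∈ {1,...,2m}. -/
theorem Equiv.Perm.apply_inv_self {α : Type*} (f : Equiv.Perm α) (x : α) : f (f⁻¹ x) = x :=
  f.apply_symm_apply x

theorem Equiv.Perm.inv_apply_self {α : Type*} (f : Equiv.Perm α) (x : α) : f⁻¹ (f x) = x :=
  f.symm_apply_apply x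

lemma exists_crossing {P : ℕ → Prop} :
    ∀ {r p : ℕ}, p ≤ r → P p → ¬ P r → ∃ m, p ≤ m ∧ m < r ∧ P m ∧ ¬ P (m + 1) := by
  intro r
  induction r with
  | zero =>
    intro p hpr hp hr
    have hp0 : p = 0 := Nat.le_zero.mp hpr
    exact absurd (hp0 ▸ hp) hr
  | succ r ih =>
    intro p hpr hp hr
    have hpne : p ≠ r + 1 := fun he => hr (he ▸ hp)
    have hpr' : p ≤ r := by omega
    by_cases h : P r
    · exact ⟨r, hpr', Nat.lt_succ_self r, h, hr⟩
    · obtain ⟨m, h1, h2, h3, h4⟩ := ih hpr' hp h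
      exact ⟨m, h1, h2.trans (Nat.lt_succ_self r), h3, h4⟩

lemma IsBaxter.inv {n : ℕ} {σ : Equiv.Perm (Fin n)} (hB : IsBaxter σ) : IsBaxter σ⁻¹ := by
  intro i j k hij hjk H
  have hjn : (j : ℕ) + 1 < n := lt_of_le_of_lt hjk k.isLt
  rcases H with ⟨h1, h2, h3⟩ | ⟨h1, h2, h3⟩
  · set q' : Fin n := σ⁻¹ ⟨(j:ℕ)+1, hjn⟩ with hq'
    set p : Fin n := σ⁻¹ i with hp
    set r : Fin n := σ⁻¹ k with hr
    set q : Fin n := σ⁻¹ j with hq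
    have hv1 : (q' : ℕ) < p := Fin.lt_def.mp h1
    have hv2 : (p : ℕ) < r := Fin.lt_def.mp h2
    have hv3 : (r : ℕ) < q := Fin.lt_def.mp h3
    have hqn := q.isLt
    have hPp : ∃ hm : (p:ℕ) < n, ((σ ⟨(p:ℕ), hm⟩ : Fin n) : ℕ) < (j:ℕ) := by
      refine ⟨p.isLt, ?_⟩
      have : σ ⟨(p:ℕ), p.isLt⟩ = i := by rw [show (⟨(p:ℕ), p.isLt⟩ : Fin n) = p from rfl,
        hp, Equiv.Perm.apply_inv_self]
      rw [this]; exact Fin.lt_def.mp hij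
    have hPr : ¬ ∃ hm : (r:ℕ) < n, ((σ ⟨(r:ℕ), hm⟩ : Fin n) : ℕ) < (j:ℕ) := by
      rintro ⟨hm, hlt⟩
      have : σ ⟨(r:ℕ), hm⟩ = k := by rw [show (⟨(r:ℕ), hm⟩ : Fin n) = r from rfl,
        hr, Equiv.Perm.apply_inv_self]
      rw [this] at hlt; omega
    obtain ⟨mm, hpm, hmr, ⟨hmn, hmlt⟩, hm1⟩ :=
      exists_crossing (P := fun mm => ∃ hm : mm < n, ((σ ⟨mm, hm⟩ : Fin n) : ℕ) < (j:ℕ))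
        (le_of_lt hv2) hPp hPr
    have hm1n : mm + 1 < n := by omega
    have hge : ¬ ((σ ⟨mm+1, hm1n⟩ : Fin n) : ℕ) < (j:ℕ) := fun hlt => hm1 ⟨hm1n, hlt⟩
    have hne1 : ((σ ⟨mm+1, hm1n⟩ : Fin n) : ℕ) ≠ (j:ℕ) := by
      intro he
      have : (⟨mm+1, hm1n⟩ : Fin n) = q := by
        rw [hq, ← Fin.val_eq_val] at *
        have : σ ⟨mm+1, hm1n⟩ = j := Fin.ext he
        rw [hq, ← this, Equiv.Perm.inv_apply_self]
      have := congrArg Fin.val this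
      simp at this; omega
    have hne2 : ((σ ⟨mm+1, hm1n⟩ : Fin n) : ℕ) ≠ (j:ℕ)+1 := by
      intro he
      have h5 : σ ⟨mm+1, hm1n⟩ = ⟨(j:ℕ)+1, hjn⟩ := Fin.ext he
      have : (⟨mm+1, hm1n⟩ : Fin n) = q' := by
        rw [hq', ← h5, Equiv.Perm.inv_apply_self]
      have := congrArg Fin.val this
      simp at this; omega
    have hbig : (j:ℕ)+1 < ((σ ⟨mm+1, hm1n⟩ : Fin n) : ℕ) := by omega
    refine hB q' ⟨mm, hmn⟩ q (Fin.lt_def.mpr (by simp; omega)) (by simp; omega)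
      (Or.inr ⟨?_, ?_, ?_⟩)
    · rw [hq, Equiv.Perm.apply_inv_self]; exact Fin.lt_def.mpr hmlt
    · rw [hq, hq', Equiv.Perm.apply_inv_self, Equiv.Perm.apply_inv_self]
      exact Fin.lt_def.mpr (Nat.lt_succ_self _)
    · rw [hq', Equiv.Perm.apply_inv_self]; exact Fin.lt_def.mpr hbig
  · set q : Fin n := σ⁻¹ j with hq
    set r : Fin n := σ⁻¹ k with hr
    set p : Fin n := σ⁻¹ i with hp
    set q' : Fin n := σ⁻¹ ⟨(j:ℕ)+1, hjn⟩ with hq'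
    have hv1 : (q : ℕ) < r := Fin.lt_def.mp h1
    have hv2 : (r : ℕ) < p := Fin.lt_def.mp h2
    have hv3 : (p : ℕ) < q' := Fin.lt_def.mp h3
    have hq'n := q'.isLt
    have hkk : (j:ℕ)+1 < (k:ℕ) := by
      rcases Nat.lt_or_ge ((j:ℕ)+1) (k:ℕ) with h | h
      · exact h
      · exfalso
        have hke : k = ⟨(j:ℕ)+1, hjn⟩ := Fin.ext (by simp; omega)
        have hrq : r = q' := by rw [hr, hq', hke]
        have := congrArg Fin.val hrq
        omega
    have hPr : ∃ hm : (r:ℕ) < n, (j:ℕ)+1 < ((σ ⟨(r:ℕ), hm⟩ : Fin n) : ℕ) := by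
      refine ⟨r.isLt, ?_⟩
      have : σ ⟨(r:ℕ), r.isLt⟩ = k := by rw [show (⟨(r:ℕ), r.isLt⟩ : Fin n) = r from rfl,
        hr, Equiv.Perm.apply_inv_self]
      rw [this]; exact hkk
    have hPp : ¬ ∃ hm : (p:ℕ) < n, (j:ℕ)+1 < ((σ ⟨(p:ℕ), hm⟩ : Fin n) : ℕ) := by
      rintro ⟨hm, hlt⟩
      have : σ ⟨(p:ℕ), hm⟩ = i := by rw [show (⟨(p:ℕ), hm⟩ : Fin n) = p from rfl,
        hp, Equiv.Perm.apply_inv_self]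
      rw [this] at hlt
      have := Fin.lt_def.mp hij; omega
    obtain ⟨mm, hpm, hmr, ⟨hmn, hmlt⟩, hm1⟩ :=
      exists_crossing (P := fun mm => ∃ hm : mm < n, (j:ℕ)+1 < ((σ ⟨mm, hm⟩ : Fin n) : ℕ))
        (le_of_lt hv2) hPr hPp
    have hm1n : mm + 1 < n := by omega
    have hge : ¬ (j:ℕ)+1 < ((σ ⟨mm+1, hm1n⟩ : Fin n) : ℕ) := fun hlt => hm1 ⟨hm1n, hlt⟩
    have hne1 : ((σ ⟨mm+1, hm1n⟩ : Fin n) : ℕ) ≠ (j:ℕ) := by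
      intro he
      have h5 : σ ⟨mm+1, hm1n⟩ = j := Fin.ext he
      have : (⟨mm+1, hm1n⟩ : Fin n) = q := by
        rw [hq, ← h5, Equiv.Perm.inv_apply_self]
      have := congrArg Fin.val this
      simp at this; omega
    have hne2 : ((σ ⟨mm+1, hm1n⟩ : Fin n) : ℕ) ≠ (j:ℕ)+1 := by
      intro he
      have h5 : σ ⟨mm+1, hm1n⟩ = ⟨(j:ℕ)+1, hjn⟩ := Fin.ext he
      have : (⟨mm+1, hm1n⟩ : Fin n) = q' := by
        rw [hq', ← h5, Equiv.Perm.inv_apply_self]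
      have := congrArg Fin.val this
      simp at this; omega
    have hsmall : ((σ ⟨mm+1, hm1n⟩ : Fin n) : ℕ) < (j:ℕ) := by omega
    refine hB q ⟨mm, hmn⟩ q' (Fin.lt_def.mpr (by simp; omega)) (by simp; omega)
      (Or.inl ⟨?_, ?_, ?_⟩)
    · have e1 : σ q = j := Equiv.Perm.apply_inv_self σ j
      rw [e1]; exact Fin.lt_def.mpr hsmall
    · have e1 : σ q = j := Equiv.Perm.apply_inv_self σ j
      have e2 : σ q' = ⟨(j:ℕ)+1, hjn⟩ := Equiv.Perm.apply_inv_self σ _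
      rw [e1, e2]; exact Fin.lt_def.mpr (Nat.lt_succ_self _)
    · have e2 : σ q' = ⟨(j:ℕ)+1, hjn⟩ := Equiv.Perm.apply_inv_self σ _
      rw [e2]; exact Fin.lt_def.mpr hmlt

lemma rc_apply {n : ℕ} (σ : Equiv.Perm (Fin n)) (x : Fin n) :
    ((Fin.revPerm * σ * Fin.revPerm : Equiv.Perm (Fin n))) x = Fin.rev (σ (Fin.rev x)) := rfl

lemma IsBaxter.rc {n : ℕ} {σ : Equiv.Perm (Fin n)} (hB : IsBaxter σ) :
    IsBaxter (Fin.revPerm * σ * Fin.revPerm) := by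
  intro i j k hij hjk H
  have hjn : (j:ℕ)+1 < n := lt_of_le_of_lt hjk k.isLt
  have hijv := Fin.lt_def.mp hij
  have hkn := k.isLt
  have hin := i.isLt
  by_cases hkj : (k:ℕ) = (j:ℕ)+1
  · have hke : (⟨(j:ℕ)+1, lt_of_le_of_lt hjk k.isLt⟩ : Fin n) = k := Fin.ext (by simp [hkj])
    rcases H with ⟨h1, h2, _⟩ | ⟨_, h2, h3⟩
    · rw [hke] at h1; exact absurd (h1.trans h2) (lt_irrefl _)
    · rw [hke] at h3; exact absurd (h2.trans h3) (lt_irrefl _)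
  · have hk2 : (j:ℕ)+2 ≤ (k:ℕ) := by omega
    have hlt : Fin.rev k < Fin.rev (⟨(j:ℕ)+1, hjn⟩ : Fin n) :=
      Fin.lt_def.mpr (by simp [Fin.val_rev]; omega)
    have hle : ((Fin.rev (⟨(j:ℕ)+1, hjn⟩ : Fin n) : Fin n) : ℕ) + 1 ≤ ((Fin.rev i : Fin n) : ℕ) := by
      simp [Fin.val_rev]; omega
    have hrevj : (⟨((Fin.rev (⟨(j:ℕ)+1, hjn⟩ : Fin n) : Fin n) : ℕ) + 1,
        lt_of_le_of_lt hle (Fin.rev i).isLt⟩ : Fin n) = Fin.rev j :=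
      Fin.ext (by simp [Fin.val_rev]; omega)
    simp only [rc_apply] at H
    rcases H with ⟨h1, h2, h3⟩ | ⟨h1, h2, h3⟩
    · refine hB (Fin.rev k) (Fin.rev ⟨(j:ℕ)+1, hjn⟩) (Fin.rev i) hlt hle (Or.inl ⟨?_, ?_, ?_⟩)
      · rw [hrevj]; exact Fin.rev_lt_rev.mp h3
      · exact Fin.rev_lt_rev.mp h2
      · exact Fin.rev_lt_rev.mp h1
    · refine hB (Fin.rev k) (Fin.rev ⟨(j:ℕ)+1, hjn⟩) (Fin.rev i) hlt hle (Or.inr ⟨?_, ?_, ?_⟩)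
      · exact Fin.rev_lt_rev.mp h3
      · exact Fin.rev_lt_rev.mp h2
      · rw [hrevj]; exact Fin.rev_lt_rev.mp h1

lemma IsAlternating.rc {m : ℕ} {σ : Equiv.Perm (Fin (2*m))} (hA : IsAlternating σ) :
    IsAlternating (Fin.revPerm * σ * Fin.revPerm) := by
  intro i hi
  have hin := i.isLt
  have ha0 : 2*m - ((i:ℕ)+2) < 2*m := by omega
  have ha1 : (2*m - ((i:ℕ)+2)) + 1 < 2*m := by omega
  have key := hA ⟨2*m - ((i:ℕ)+2), ha0⟩ ha1
  have e1 : Fin.rev i = (⟨(2*m - ((i:ℕ)+2)) + 1, ha1⟩ : Fin (2*m)) :=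
    Fin.ext (by simp [Fin.val_rev]; omega)
  have e2 : Fin.rev (⟨(i:ℕ)+1, hi⟩ : Fin (2*m)) = (⟨2*m - ((i:ℕ)+2), ha0⟩ : Fin (2*m)) :=
    Fin.ext (by simp [Fin.val_rev])
  constructor
  · intro hev
    have hev' : Even (2*m - ((i:ℕ)+2)) := by
      have := Nat.even_iff.mp hev
      exact Nat.even_iff.mpr (by omega)
    rw [rc_apply, rc_apply, e1, e2]
    exact Fin.rev_lt_rev.mpr (key.1 hev')
  · intro hodd
    have hodd' : Odd (2*m - ((i:ℕ)+2)) := by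
      have := Nat.odd_iff.mp hodd
      exact Nat.odd_iff.mpr (by omega)
    rw [rc_apply, rc_apply, e1, e2]
    exact Fin.rev_lt_rev.mpr (key.2 hodd')

lemma revPerm_inv (n : ℕ) : (Fin.revPerm : Equiv.Perm (Fin n))⁻¹ = Fin.revPerm := by
  ext x; simp [Equiv.Perm.inv_def]

lemma revPerm_mul_self (n : ℕ) :
    (Fin.revPerm : Equiv.Perm (Fin n)) * Fin.revPerm = 1 := by
  ext x; simp [Equiv.Perm.mul_apply]

lemma rcinv_inv {n : ℕ} (σ : Equiv.Perm (Fin n)) :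
    (Fin.revPerm * σ⁻¹ * Fin.revPerm : Equiv.Perm (Fin n))⁻¹ =
      Fin.revPerm * σ * Fin.revPerm := by
  rw [mul_inv_rev, mul_inv_rev, revPerm_inv, inv_inv, mul_assoc]

lemma rcinv_invol {n : ℕ} (σ : Equiv.Perm (Fin n)) :
    Fin.revPerm * (Fin.revPerm * σ⁻¹ * Fin.revPerm : Equiv.Perm (Fin n))⁻¹ * Fin.revPerm = σ := by
  rw [rcinv_inv]
  calc Fin.revPerm * (Fin.revPerm * σ * Fin.revPerm) * Fin.revPerm
      = (Fin.revPerm * Fin.revPerm) * σ * (Fin.revPerm * Fin.revPerm) := by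
        simp only [mul_assoc]
    _ = σ := by rw [revPerm_mul_self]; simp

lemma IsDAB.rcinv {m : ℕ} {σ : Equiv.Perm (Fin (2*m))} (h : IsDAB σ) :
    IsDAB (Fin.revPerm * σ⁻¹ * Fin.revPerm) := by
  obtain ⟨hb, ha, hai⟩ := h
  refine ⟨hb.inv.rc, hai.rc, ?_⟩
  rw [rcinv_inv]; exact ha.rc

lemma transfer {m i j : ℕ} (hm : 1 ≤ m) (hi1 : 1 ≤ i) (hi2 : i ≤ 2*m)
    (hj1 : 1 ≤ j) (hj2 : j ≤ 2*m) (σ : Equiv.Perm (Fin (2*m)))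
    (h : IsDAB σ ∧ ∃ hi : i - 1 < 2*m, ((σ ⟨i - 1, hi⟩ : Fin (2*m)) : ℕ) = j - 1) :
    IsDAB (Fin.revPerm * σ⁻¹ * Fin.revPerm) ∧
      ∃ h' : (2*m+1-j) - 1 < 2*m,
        (((Fin.revPerm * σ⁻¹ * Fin.revPerm : Equiv.Perm (Fin (2*m)))
            ⟨(2*m+1-j) - 1, h'⟩ : Fin (2*m)) : ℕ) = (2*m+1-i) - 1 := by
  obtain ⟨hd, hii, hval⟩ := h
  have hjj : j - 1 < 2*m := by omega
  refine ⟨hd.rcinv, by omega, ?_⟩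
  have hσ : σ ⟨i-1, hii⟩ = ⟨j-1, hjj⟩ := Fin.ext (by simpa using hval)
  rw [rc_apply]
  have e1 : Fin.rev (⟨(2*m+1-j) - 1, by omega⟩ : Fin (2*m)) = (⟨j-1, hjj⟩ : Fin (2*m)) :=
    Fin.ext (by simp [Fin.val_rev]; omega)
  rw [e1]
  have e2 : σ⁻¹ (⟨j-1, hjj⟩ : Fin (2*m)) = ⟨i-1, hii⟩ := by
    rw [← hσ, Equiv.Perm.inv_apply_self]
  rw [e2]
  simp [Fin.val_rev]; omega

lemma transfer' {m i j : ℕ} (hm : 1 ≤ m) (hi1 : 1 ≤ i) (hi2 : i ≤ 2*m)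
    (hj1 : 1 ≤ j) (hj2 : j ≤ 2*m) (σ : Equiv.Perm (Fin (2*m)))
    (h : IsDAB σ ∧ ∃ h' : (2*m+1-j) - 1 < 2*m,
        ((σ ⟨(2*m+1-j) - 1, h'⟩ : Fin (2*m)) : ℕ) = (2*m+1-i) - 1) :
    IsDAB (Fin.revPerm * σ⁻¹ * Fin.revPerm) ∧
      ∃ hi : i - 1 < 2*m,
        (((Fin.revPerm * σ⁻¹ * Fin.revPerm : Equiv.Perm (Fin (2*m)))
            ⟨i - 1, hi⟩ : Fin (2*m)) : ℕ) = j - 1 := by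
  have h2 := transfer hm (by omega : 1 ≤ 2*m+1-j) (by omega) (by omega : 1 ≤ 2*m+1-i)
    (by omega) σ h
  rw [show 2*m+1-(2*m+1-i) = i from by omega, show 2*m+1-(2*m+1-j) = j from by omega] at h2
  exact h2


theorem dabCount_symm_antidiag (m i j : ℕ) (hm : 1 ≤ m) (hi1 : 1 ≤ i) (hi2 : i ≤ 2 * m)
    (hj1 : 1 ≤ j) (hj2 : j ≤ 2 * m) :
    dabCount m i j = dabCount m (2 * m + 1 - j) (2 * m + 1 - i) := by
  unfold dabCount
  refine Nat.card_congr ⟨fun σ => ⟨Fin.revPerm * σ.1⁻¹ * Fin.revPerm,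
      transfer hm hi1 hi2 hj1 hj2 σ.1 σ.2⟩,
    fun σ => ⟨Fin.revPerm * σ.1⁻¹ * Fin.revPerm,
      transfer' hm hi1 hi2 hj1 hj2 σ.1 σ.2⟩, ?_, ?_⟩
  · intro σ; exact Subtype.ext (rcinv_invol σ.1)
  · intro σ; exact Subtype.ext (rcinv_invol σ.1)
end

section
/- If σ is a doubly alternating Baxter permutation of {1,...,2m} (m ≥ 1), then σ(1) is odd. -/
theorem dab_first_value_odd (m : ℕ) (hm : 1 ≤ m) (σ : Equiv.Perm (Fin (2 * m)))
    (h : IsDAB σ) :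
    Odd (((σ ⟨0, by omega⟩ : Fin (2 * m)) : ℕ) + 1) := by
  set v : Fin (2 * m) := σ ⟨0, by omega⟩ with hv
  by_contra hodd
  have hvodd : Odd (v : ℕ) := by
    rcases Nat.even_or_odd (v : ℕ) with he | ho
    · exact absurd he.add_one hodd
    · exact ho
  have hv1 : 1 ≤ (v : ℕ) := hvodd.pos
  have hlt : ((v : ℕ) - 1) + 1 < 2 * m := by
    have := v.isLt; omega
  have key := (h.2.2 ⟨(v : ℕ) - 1, by omega⟩ hlt).1 (by
    simp only [Fin.val_mk]
    rcases hvodd with ⟨t, ht⟩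
    exact ⟨t, by omega⟩)
  have heq : (⟨((v : ℕ) - 1) + 1, hlt⟩ : Fin (2 * m)) = v := by
    apply Fin.ext; simp; omega
  rw [heq] at key
  have : σ⁻¹ v = ⟨0, by omega⟩ := by simp [hv]
  rw [this] at key
  exact absurd key (by simp [Fin.lt_def])
end
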